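/- Every metrically open subset of FIN_k^∞ is H-Ramsey for every semiselective coideal H: if X ⊆ FIN_k^∞ is open in the metric (product) topology and [a,A] ≠ ∅ with A ∈ H, then there is B ∈ [a,A] ∩ H with [a,B] ⊆ X or [a,B] ∩ X = ∅. -/

import Mathlib

open scoped symmDiff

namespace FINkSpace

/-- The support of `p : ℕ → ℕ`. -/
def supp (p : ℕ → ℕ) : Set ℕ := {n | p n ≠ 0}

/-- `p` is an element of `FIN_k`: values at most `k`, finite support, `k` attained. -/
def IsFINk (k : ℕ) (p : ℕ → ℕ) : Prop :=
  (∀ n, p n ≤ k) ∧ (supp p).Finite ∧ ∃ n, p n = k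

/-- The tetris operation `T(p)(n) = max (p n - 1) 0` (truncated subtraction). -/
def tetris (p : ℕ → ℕ) : ℕ → ℕ := fun n => p n - 1

/-- `A` is an infinite block sequence of elements of `FIN_k`. -/
def IsBlockSeq (k : ℕ) (A : ℕ → ℕ → ℕ) : Prop :=
  (∀ n, IsFINk k (A n)) ∧ ∀ n i j, A n i ≠ 0 → A (n + 1) j ≠ 0 → i < j

/-- `p` belongs to the combinatorial span `[B]`:
`p = T^{(i₀)}(B n₀) + ⋯ + T^{(i_l)}(B n_l)` with `n₀ < ⋯ < n_l` and some `i_j = 0`.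
Note `T^{(i)}(q) m = q m - i` (truncated subtraction). -/
def InSpan (k : ℕ) (B : ℕ → ℕ → ℕ) (p : ℕ → ℕ) : Prop :=
  ∃ (l : ℕ) (n : Fin (l + 1) → ℕ) (i : Fin (l + 1) → ℕ),
    StrictMono n ∧ (∀ j, i j ≤ k) ∧ (∃ j, i j = 0) ∧
    p = fun m => ∑ j, (B (n j) m - i j)

/-- `A ≤ B` : `A` is a condensation of `B` (every term of `A` lies in `[B]`). -/
def Cond (k : ℕ) (A B : ℕ → ℕ → ℕ) : Prop := ∀ n, InSpan k B (A n)

/-- `A ≤* B` : all but finitely many terms of `A` lie in `[B]`. -/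
def AlmostCond (k : ℕ) (A B : ℕ → ℕ → ℕ) : Prop := ∃ N, ∀ n, N ≤ n → InSpan k B (A n)

/-- `a` is a finite block sequence of elements of `FIN_k`. -/
def IsFinBlockSeq (k : ℕ) (a : List (ℕ → ℕ)) : Prop :=
  (∀ p ∈ a, IsFINk k p) ∧
  ∀ m, m + 1 < a.length → ∀ i j,
    (a.getD m fun _ => 0) i ≠ 0 → (a.getD (m + 1) fun _ => 0) j ≠ 0 → i < j

/-- `p` belongs to the span of the finite block sequence `a`. -/
def InSpanList (k : ℕ) (a : List (ℕ → ℕ)) (p : ℕ → ℕ) : Prop :=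
  ∃ (l : ℕ) (n : Fin (l + 1) → ℕ) (i : Fin (l + 1) → ℕ),
    StrictMono n ∧ (∀ j, n j < a.length) ∧ (∀ j, i j ≤ k) ∧ (∃ j, i j = 0) ∧
    p = fun m => ∑ j, ((a.getD (n j) fun _ => 0) m - i j)

/-- `rList n A` is the finite block sequence of the first `n` blocks of `A`. -/
def rList (n : ℕ) (A : ℕ → ℕ → ℕ) : List (ℕ → ℕ) := (List.range n).map A

/-- `b ≤_fin a` : every term of the finite block sequence `b` lies in the span of `a`. -/
def LeFin (k : ℕ) (b a : List (ℕ → ℕ)) : Prop :=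
  IsFinBlockSeq k b ∧ ∀ p ∈ b, InSpanList k a p

/-- The Ellentuck-type basic set `[a,A]`. -/
def Basic (k : ℕ) (a : List (ℕ → ℕ)) (A : ℕ → ℕ → ℕ) : Set (ℕ → ℕ → ℕ) :=
  {B | IsBlockSeq k B ∧ rList a.length B = a ∧ Cond k B A}

/-- `depth_A(a)` : the least `n` with `a ≤_fin r_n(A)`. -/
noncomputable def depth (k : ℕ) (A : ℕ → ℕ → ℕ) (a : List (ℕ → ℕ)) : ℕ :=
  sInf {n | ∀ p ∈ a, InSpanList k (rList n A) p}

/-- `a ∈ FIN_k^{<∞} ↾ A` : `a` is a finite block sequence all whose terms lie in `[A]`. -/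
def FinCond (k : ℕ) (a : List (ℕ → ℕ)) (A : ℕ → ℕ → ℕ) : Prop :=
  IsFinBlockSeq k a ∧ ∀ p ∈ a, InSpan k A p

end FINkSpace

namespace FINkSpace

/-- A coideal on `FIN_k^∞` (Definition of coideal in the paper). -/
structure Coideal (k : ℕ) where
  mem : (ℕ → ℕ → ℕ) → Prop
  blockseq : ∀ A, mem A → IsBlockSeq k A
  finiteChanges : ∀ A B, mem A → IsBlockSeq k B → (Set.range A ∆ Set.range B).Finite → mem B
  upward : ∀ A B, mem A → IsBlockSeq k B → Cond k A B → mem B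
  a3_1 : ∀ A, mem A → ∀ a, FinCond k a A →
    ∀ B, mem B → B ∈ Basic k (rList (depth k A a) A) A → (Basic k a B).Nonempty
  a3_2 : ∀ A, mem A → ∀ a, FinCond k a A →
    ∀ B, mem B → Cond k B A → (Basic k a B).Nonempty →
      ∃ A', mem A' ∧ A' ∈ Basic k (rList (depth k A a) A) A ∧
        (Basic k a A').Nonempty ∧ Basic k a A' ⊆ Basic k a B
  a4 : ∀ A, mem A → ∀ a, FinCond k a A → ∀ O : Set (List (ℕ → ℕ)),
    ∃ B, mem B ∧ B ∈ Basic k (rList (depth k A a) A) A ∧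
      ({b | ∃ C ∈ Basic k a B, b = rList (a.length + 1) C} ⊆ O ∨
       {b | ∃ C ∈ Basic k a B, b = rList (a.length + 1) C} ∩ O = ∅)

/-- `D` is dense open in `S` (with respect to the condensation order). -/
def DenseOpenIn (k : ℕ) (D S : Set (ℕ → ℕ → ℕ)) : Prop :=
  D ⊆ S ∧ (∀ A ∈ S, ∃ B ∈ D, Cond k B A) ∧
  ∀ A B, A ∈ S → B ∈ D → Cond k A B → A ∈ D

/-- `H` is a selective coideal. -/
def Selective (k : ℕ) (H : Coideal k) : Prop :=
  ∀ a A, H.mem A → (Basic k a A).Nonempty →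
    ∀ As : ℕ → ℕ → ℕ → ℕ,
      (∀ n, H.mem (As n) ∧ Cond k (As n) A ∧ Cond k (As (n + 1)) (As n) ∧
        (Basic k a (As n)).Nonempty) →
      ∃ B, H.mem B ∧ B ∈ Basic k a A ∧
        ∀ b, FinCond k b B → Basic k b B ⊆ Basic k b (As (depth k A b))

/-- `H` is a semiselective coideal. -/
def Semiselective (k : ℕ) (H : Coideal k) : Prop :=
  ∀ A, H.mem A →
    ∀ D : List (ℕ → ℕ) → Set (ℕ → ℕ → ℕ),
      (∀ a, FinCond k a A →
        DenseOpenIn k (D a) ({B | H.mem B} ∩ Basic k (rList (depth k A a) A) A)) →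
      ∀ C, H.mem C → Cond k C A →
        ∃ B, H.mem B ∧ Cond k B C ∧
          ∃ As : List (ℕ → ℕ) → ℕ → ℕ → ℕ,
            (∀ a, FinCond k a A → As a ∈ D a) ∧
            ∀ a, FinCond k a B → Basic k a B ⊆ Basic k a (As a)

end FINkSpace

namespace FINkSpace

-- ===================== auxiliary lemmas ========================

noncomputable section
open Classical

abbrev zf : ℕ → ℕ := fun _ => 0

lemma length_rList (n : ℕ) (A : ℕ → ℕ → ℕ) : (rList n A).length = n := by
  simp [rList]

lemma getD_rList {x n : ℕ} (A : ℕ → ℕ → ℕ) (h : x < n) :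
    (rList n A).getD x zf = A x := by
  rw [List.getD_eq_getElem _ _ (by simpa [rList] using h)]
  simp [rList]

lemma take_rList {m n : ℕ} (A : ℕ → ℕ → ℕ) (h : m ≤ n) :
    (rList n A).take m = rList m A := by
  simp [rList, ← List.map_take, List.take_range, Nat.min_eq_left h]

lemma mem_rList {p : ℕ → ℕ} {n : ℕ} {A : ℕ → ℕ → ℕ} :
    p ∈ rList n A ↔ ∃ x < n, A x = p := by
  simp [rList]

private lemma rep_iff {k : ℕ} (P : ℕ → Prop) (f : ℕ → ℕ → ℕ) (p : ℕ → ℕ) :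
    (∃ (l : ℕ) (n : Fin (l + 1) → ℕ) (i : Fin (l + 1) → ℕ),
      StrictMono n ∧ (∀ j, P (n j)) ∧ (∀ j, i j ≤ k) ∧ (∃ j, i j = 0) ∧
      p = fun m => ∑ j, (f (n j) m - i j)) ↔
    (∃ (s : Finset ℕ) (g : ℕ → ℕ), (∀ x ∈ s, P x) ∧ (∀ x ∈ s, g x ≤ k) ∧
      (∃ x ∈ s, g x = 0) ∧ p = fun m => ∑ x ∈ s, (f x m - g x)) := by
  constructor
  · rintro ⟨l, n, i, hmono, hP, hik, ⟨j0, hj0⟩, hp⟩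
    refine ⟨Finset.image n Finset.univ,
      fun x => if h : ∃ j, n j = x then i h.choose else 0, ?_, ?_, ?_, ?_⟩
    · rintro x hx
      simp only [Finset.mem_image] at hx
      obtain ⟨j, _, rfl⟩ := hx
      exact hP j
    · rintro x hx
      show (if h : ∃ j, n j = x then i h.choose else 0) ≤ k
      split
      · exact hik _
      · exact Nat.zero_le _
    · refine ⟨n j0, Finset.mem_image_of_mem _ (Finset.mem_univ _), ?_⟩
      show (if h : ∃ j, n j = n j0 then i h.choose else 0) = 0
      have : ∃ j', n j' = n j0 := ⟨j0, rfl⟩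
      rw [dif_pos this, hmono.injective this.choose_spec]
      exact hj0
    · rw [hp]; funext m
      rw [Finset.sum_image (by intro x _ y _ h; exact hmono.injective h)]
      apply Finset.sum_congr rfl
      intro j _
      show f (n j) m - i j = f (n j) m - (if h : ∃ j', n j' = n j then i h.choose else 0)
      have : ∃ j', n j' = n j := ⟨j, rfl⟩
      rw [dif_pos this, hmono.injective this.choose_spec]
  · rintro ⟨s, g, hP, hgk, ⟨x0, hx0s, hx0⟩, hp⟩
    have hpos : 0 < s.card := Finset.card_pos.mpr ⟨x0, hx0s⟩
    have hcard : s.card = (s.card - 1) + 1 := (Nat.succ_pred_eq_of_pos hpos).symm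
    set l := s.card - 1 with hl
    let e := s.orderEmbOfFin hcard
    have hmem : ∀ j, e j ∈ s := fun j => s.orderEmbOfFin_mem hcard j
    have hsurj : ∀ x ∈ s, ∃ j, e j = x := by
      intro x hx
      have := s.range_orderEmbOfFin hcard
      have hx' : x ∈ Set.range (s.orderEmbOfFin hcard) := by rw [this]; exact hx
      exact hx'
    have himg : Finset.image (fun j => e j) Finset.univ = s := by
      apply Finset.Subset.antisymm
      · intro x hx
        simp only [Finset.mem_image] at hx
        obtain ⟨j, _, rfl⟩ := hx; exact hmem j
      · intro x hx
        obtain ⟨j, hj⟩ := hsurj x hx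
        exact Finset.mem_image.mpr ⟨j, Finset.mem_univ _, hj⟩
    refine ⟨l, fun j => e j, fun j => g (e j), (s.orderEmbOfFin hcard).strictMono,
      fun j => hP _ (hmem j), fun j => hgk _ (hmem j), ?_, ?_⟩
    · obtain ⟨j, hj⟩ := hsurj x0 hx0s
      exact ⟨j, by show g (e j) = 0; rw [hj]; exact hx0⟩
    · rw [hp]; funext m
      rw [← himg, Finset.sum_image (by intro x _ y _ h; exact (s.orderEmbOfFin hcard).injective h)]

lemma inSpan_iff {k : ℕ} {B : ℕ → ℕ → ℕ} {p : ℕ → ℕ} :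
    InSpan k B p ↔ ∃ (s : Finset ℕ) (g : ℕ → ℕ), (∀ x ∈ s, g x ≤ k) ∧
      (∃ x ∈ s, g x = 0) ∧ p = fun m => ∑ x ∈ s, (B x m - g x) := by
  rw [show (∃ (s : Finset ℕ) (g : ℕ → ℕ), (∀ x ∈ s, g x ≤ k) ∧
      (∃ x ∈ s, g x = 0) ∧ p = fun m => ∑ x ∈ s, (B x m - g x)) ↔
      (∃ (s : Finset ℕ) (g : ℕ → ℕ), (∀ x ∈ s, True) ∧ (∀ x ∈ s, g x ≤ k) ∧
      (∃ x ∈ s, g x = 0) ∧ p = fun m => ∑ x ∈ s, (B x m - g x)) by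
        constructor
        · rintro ⟨s, g, h1, h2, h3⟩; exact ⟨s, g, fun _ _ => trivial, h1, h2, h3⟩
        · rintro ⟨s, g, _, h1, h2, h3⟩; exact ⟨s, g, h1, h2, h3⟩]
  rw [← rep_iff (fun _ => True) B p]
  constructor
  · rintro ⟨l, n, i, h1, h2, h3, h4⟩
    exact ⟨l, n, i, h1, fun _ => trivial, h2, h3, h4⟩
  · rintro ⟨l, n, i, h1, _, h2, h3, h4⟩
    exact ⟨l, n, i, h1, h2, h3, h4⟩

lemma inSpanList_rList_iff {k N : ℕ} {A : ℕ → ℕ → ℕ} {p : ℕ → ℕ} :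
    InSpanList k (rList N A) p ↔ ∃ (s : Finset ℕ) (g : ℕ → ℕ), (∀ x ∈ s, x < N) ∧
      (∀ x ∈ s, g x ≤ k) ∧ (∃ x ∈ s, g x = 0) ∧
      p = fun m => ∑ x ∈ s, (A x m - g x) := by
  rw [← rep_iff (fun x => x < N) A p]
  unfold InSpanList
  constructor
  · rintro ⟨l, n, i, h1, h2, h3, h4, h5⟩
    have h2' : ∀ j, n j < N := by simpa [length_rList] using h2
    refine ⟨l, n, i, h1, h2', h3, h4, ?_⟩
    rw [h5]; funext m
    apply Finset.sum_congr rfl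
    intro j _
    rw [getD_rList A (h2' j)]
  · rintro ⟨l, n, i, h1, h2, h3, h4, h5⟩
    refine ⟨l, n, i, h1, by simpa [length_rList] using h2, h3, h4, ?_⟩
    rw [h5]; funext m
    apply Finset.sum_congr rfl
    intro j _
    rw [getD_rList A (h2 j)]

lemma inSpan_self {k : ℕ} (A : ℕ → ℕ → ℕ) (n : ℕ) : InSpan k A (A n) := by
  rw [inSpan_iff]
  exact ⟨{n}, zf, fun x _ => Nat.zero_le _, ⟨n, Finset.mem_singleton_self n, rfl⟩,
    by funext m; simp⟩

lemma cond_refl {k : ℕ} (A : ℕ → ℕ → ℕ) : Cond k A A := fun n => inSpan_self A n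

lemma suppNe {k : ℕ} (hk : 1 ≤ k) {p : ℕ → ℕ} (h : IsFINk k p) : ∃ u, p u ≠ 0 := by
  obtain ⟨u, hu⟩ := h.2.2
  exact ⟨u, by omega⟩

lemma blockseq_lt {k : ℕ} (hk : 1 ≤ k) {A : ℕ → ℕ → ℕ} (hA : IsBlockSeq k A) :
    ∀ n x, x < n → ∀ u v, A x u ≠ 0 → A n v ≠ 0 → u < v := by
  intro n
  induction n with
  | zero => intro x hx; omega
  | succ n ih =>
    intro x hx u v hu hv
    rcases Nat.lt_succ_iff_lt_or_eq.mp hx with h | h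
    · obtain ⟨w, hw⟩ := suppNe hk (hA.1 n)
      exact lt_trans (ih x h u w hu hw) (hA.2 n w v hw hv)
    · subst h; exact hA.2 x u v hu hv

lemma blockseq_disj {k : ℕ} (hk : 1 ≤ k) {A : ℕ → ℕ → ℕ} (hA : IsBlockSeq k A) :
    ∀ x x', x ≠ x' → ∀ u, A x u ≠ 0 → A x' u ≠ 0 → False := by
  intro x x' hne u hu hu'
  rcases Nat.lt_or_ge x x' with h | h
  · exact absurd (blockseq_lt hk hA x' x h u u hu hu') (lt_irrefl u)
  · have : x' < x := by omega
    exact absurd (blockseq_lt hk hA x x' this u u hu' hu) (lt_irrefl u)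

lemma blockseq_ge {k : ℕ} (hk : 1 ≤ k) {A : ℕ → ℕ → ℕ} (hA : IsBlockSeq k A) :
    ∀ n v, A n v ≠ 0 → n ≤ v := by
  intro n
  induction n with
  | zero => intro v _; exact Nat.zero_le v
  | succ n ih =>
    intro v hv
    obtain ⟨w, hw⟩ := suppNe hk (hA.1 n)
    have h1 := ih w hw
    have h2 := hA.2 n w v hw hv
    omega

lemma sum_sub_distrib {α : Type*} [DecidableEq α] (s : Finset α) (f : α → ℕ) (c : ℕ)
    (h : ∀ x ∈ s, ∀ y ∈ s, f x ≠ 0 → f y ≠ 0 → x = y) :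
    (∑ x ∈ s, f x) - c = ∑ x ∈ s, (f x - c) := by
  by_cases hz : ∃ x ∈ s, f x ≠ 0
  · obtain ⟨x0, hx0s, hx0⟩ := hz
    have h1 : ∑ x ∈ s, f x = f x0 := by
      apply Finset.sum_eq_single_of_mem x0 hx0s
      intro y hy hne
      by_contra hc; exact hne (h y hy x0 hx0s hc hx0)
    have h2 : ∑ x ∈ s, (f x - c) = f x0 - c := by
      apply Finset.sum_eq_single_of_mem x0 hx0s
      intro y hy hne
      have : f y = 0 := by by_contra hc; exact hne (h y hy x0 hx0s hc hx0)
      simp [this]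
    rw [h1, h2]
  · push_neg at hz
    have h1 : ∑ x ∈ s, f x = 0 := Finset.sum_eq_zero hz
    have h2 : ∑ x ∈ s, (f x - c) = 0 := Finset.sum_eq_zero (fun x hx => by simp [hz x hx])
    simp [h1, h2]

lemma inSpan_trans {k : ℕ} (hk : 1 ≤ k) {B C : ℕ → ℕ → ℕ} {p : ℕ → ℕ}
    (hB : IsBlockSeq k B) (hC : IsBlockSeq k C) (hBC : Cond k B C)
    (hp : InSpan k B p) : InSpan k C p := by
  rw [inSpan_iff] at hp
  obtain ⟨s, g, hgk, ⟨x0, hx0s, hx0⟩, hpeq⟩ := hp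
  have hrep : ∀ x, ∃ (tx : Finset ℕ) (hx : ℕ → ℕ), (∀ y ∈ tx, hx y ≤ k) ∧
      (∃ y ∈ tx, hx y = 0) ∧ B x = fun m => ∑ y ∈ tx, (C y m - hx y) := by
    intro x; exact inSpan_iff.mp (hBC x)
  choose t gi ht1 ht2 ht3 using hrep
  set h : ℕ → ℕ → ℕ := fun x y => gi x y + g x with hh
  set S : Finset ℕ := s.biUnion t with hS
  set T : ℕ → Finset ℕ := fun y => s.filter (fun x => y ∈ t x) with hT
  -- contribution support fact
  have fact1 : ∀ x y, y ∈ t x → ∀ m', C y m' - gi x y ≠ 0 → B x m' ≠ 0 := by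
    intro x y hy m' hne
    have hBx : B x m' = ∑ y' ∈ t x, (C y' m' - gi x y') := congrFun (ht3 x) m'
    have hle : C y m' - gi x y ≤ ∑ y' ∈ t x, (C y' m' - gi x y') :=
      Finset.single_le_sum (f := fun y' => C y' m' - gi x y') (fun _ _ => Nat.zero_le _) hy
    omega
  have fact1' : ∀ x y, y ∈ t x → ∀ m', C y m' - h x y ≠ 0 → B x m' ≠ 0 := by
    intro x y hy m' hne
    apply fact1 x y hy m'
    have : h x y = gi x y + g x := rfl
    omega
  -- unique effective index
  have fact2 : ∀ y, ∀ x ∈ T y, ∀ x' ∈ T y,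
      (∃ m', C y m' - h x y ≠ 0) → (∃ m'', C y m'' - h x' y ≠ 0) → x = x' := by
    intro y x hx x' hx' ⟨m', hm'⟩ ⟨m'', hm''⟩
    simp only [hT, Finset.mem_filter] at hx hx'
    by_contra hne
    rcases le_total (h x y) (h x' y) with hle | hle
    · have e1 : C y m'' - h x y ≠ 0 := by omega
      exact blockseq_disj hk hB x x' hne m'' (fact1' x y hx.2 m'' e1) (fact1' x' y hx'.2 m'' hm'')
    · have e1 : C y m' - h x' y ≠ 0 := by omega
      exact blockseq_disj hk hB x x' hne m' (fact1' x y hx.2 m' hm') (fact1' x' y hx'.2 m' e1)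
  set Hm : ℕ → ℕ := fun y => sInf {v | ∃ x ∈ T y, v = h x y} with hHm
  set G : ℕ → ℕ := fun y => min (Hm y) k with hG
  have hTne : ∀ y ∈ S, ((fun y => {v | ∃ x ∈ T y, v = h x y}) y).Nonempty := by
    intro y hy
    simp only [hS, Finset.mem_biUnion] at hy
    obtain ⟨x, hxs, hyx⟩ := hy
    exact ⟨h x y, x, by simp [hT, Finset.mem_filter, hxs, hyx], rfl⟩
  have hHm_mem : ∀ y ∈ S, ∃ x ∈ T y, Hm y = h x y := fun y hy => Nat.sInf_mem (hTne y hy)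
  have hHm_le : ∀ y x, x ∈ T y → Hm y ≤ h x y := by
    intro y x hx
    exact Nat.sInf_le ⟨x, hx, rfl⟩
  -- pointwise evaluation per y
  have eq3 : ∀ y ∈ S, ∀ m, ∑ x ∈ T y, (C y m - h x y) = C y m - G y := by
    intro y hy m
    by_cases heff : ∃ x ∈ T y, ∃ m', C y m' - h x y ≠ 0
    · obtain ⟨xe, hxe, m', hm'⟩ := heff
      have huniq : ∀ x ∈ T y, x ≠ xe → ∀ m'', C y m'' - h x y = 0 := by
        intro x hx hne m''
        by_contra hc
        exact hne (fact2 y x hx xe hxe ⟨m'', hc⟩ ⟨m', hm'⟩)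
      have hmin : ∀ x ∈ T y, h xe y ≤ h x y := by
        intro x hx
        by_contra hlt
        push_neg at hlt
        rcases eq_or_ne x xe with rfl | hne
        · omega
        · have := huniq x hx hne m'
          omega
      have hHmv : Hm y = h xe y := by
        obtain ⟨x1, hx1, hx1v⟩ := hHm_mem y hy
        have l1 := hHm_le y xe hxe
        have l2 := hmin x1 hx1
        omega
      have hek : h xe y ≤ k := by
        have := (hC.1 y).1 m'
        omega
      have hGv : G y = h xe y := by simp [hG, hHmv]; omega
      have hsum : ∑ x ∈ T y, (C y m - h x y) = C y m - h xe y := by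
        apply Finset.sum_eq_single_of_mem xe hxe
        intro x hx hne
        exact huniq x hx hne m
      rw [hsum, hGv]
    · push_neg at heff
      have h1 : ∑ x ∈ T y, (C y m - h x y) = 0 :=
        Finset.sum_eq_zero (fun x hx => heff x hx m)
      obtain ⟨x1, hx1, hx1v⟩ := hHm_mem y hy
      have h2 : C y m ≤ G y := by
        have := heff x1 hx1 m
        have hk' := (hC.1 y).1 m
        simp only [hG]
        omega
      omega
  -- swap of double sum
  have hsub : ∀ x ∈ s, t x ⊆ S := fun x hx => Finset.subset_biUnion_of_mem t hx
  rw [inSpan_iff]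
  refine ⟨S, G, fun y _ => min_le_right _ _, ?_, ?_⟩
  · obtain ⟨y0, hy0, hgi0⟩ := ht2 x0
    have hy0S : y0 ∈ S := by
      simp only [hS, Finset.mem_biUnion]; exact ⟨x0, hx0s, hy0⟩
    refine ⟨y0, hy0S, ?_⟩
    have hx0T : x0 ∈ T y0 := by simp [hT, Finset.mem_filter, hx0s, hy0]
    have : h x0 y0 = 0 := by simp [hh, hgi0, hx0]
    have := hHm_le y0 x0 hx0T
    simp only [hG]
    omega
  · rw [hpeq]; funext m
    have eq1 : ∀ x ∈ s, B x m - g x = ∑ y ∈ t x, (C y m - h x y) := by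
      intro x hx
      have hBx : B x m = ∑ y ∈ t x, (C y m - gi x y) := congrFun (ht3 x) m
      rw [hBx, sum_sub_distrib]
      · apply Finset.sum_congr rfl
        intro y _
        simp only [hh]
        omega
      · intro y hy y' hy' hny hny'
        by_contra hne
        have c1 : C y m ≠ 0 := by omega
        have c2 : C y' m ≠ 0 := by omega
        exact blockseq_disj hk hC y y' hne m c1 c2
    rw [Finset.sum_congr rfl eq1]
    have swap : ∑ x ∈ s, ∑ y ∈ t x, (C y m - h x y) =
        ∑ y ∈ S, ∑ x ∈ T y, (C y m - h x y) := by
      have step1 : ∀ x ∈ s, ∑ y ∈ t x, (C y m - h x y) =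
          ∑ y ∈ S, if y ∈ t x then (C y m - h x y) else 0 := by
        intro x hx
        rw [← Finset.sum_filter, Finset.filter_mem_eq_inter,
          Finset.inter_eq_right.mpr (hsub x hx)]
      rw [Finset.sum_congr rfl step1, Finset.sum_comm]
      apply Finset.sum_congr rfl
      intro y _
      rw [← Finset.sum_filter]
    rw [swap]
    exact Finset.sum_congr rfl (fun y hy => eq3 y hy m)

lemma cond_trans {k : ℕ} (hk : 1 ≤ k) {A B C : ℕ → ℕ → ℕ}
    (hB : IsBlockSeq k B) (hC : IsBlockSeq k C)
    (hAB : Cond k A B) (hBC : Cond k B C) : Cond k A C :=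
  fun n => inSpan_trans hk hB hC hBC (hAB n)

lemma basic_mono {k : ℕ} (hk : 1 ≤ k) {t : List (ℕ → ℕ)} {A' B' : ℕ → ℕ → ℕ}
    (hA' : IsBlockSeq k A') (hB' : IsBlockSeq k B') (h : Cond k A' B') :
    Basic k t A' ⊆ Basic k t B' := by
  rintro C ⟨hC1, hC2, hC3⟩
  exact ⟨hC1, hC2, cond_trans hk hA' hB' hC3 h⟩

def shiftSeq (m : ℕ) (E : ℕ → ℕ → ℕ) : ℕ → ℕ → ℕ := fun n => E (n + m)

lemma isBlockSeq_shift {k m : ℕ} {E : ℕ → ℕ → ℕ} (hE : IsBlockSeq k E) :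
    IsBlockSeq k (shiftSeq m E) := by
  constructor
  · intro n; exact hE.1 _
  · intro n i j hi hj
    apply hE.2 (n + m) i j hi
    have : n + 1 + m = n + m + 1 := by omega
    simpa [shiftSeq, this] using hj

lemma inSpan_shift_absorb {k m : ℕ} {E : ℕ → ℕ → ℕ} {p : ℕ → ℕ}
    (h : InSpan k (shiftSeq m E) p) : InSpan k E p := by
  rw [inSpan_iff] at h ⊢
  obtain ⟨s, g, h1, ⟨x0, hx0, h0⟩, hp⟩ := h
  refine ⟨s.image (· + m), fun y => g (y - m), ?_, ?_, ?_⟩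
  · intro y hy
    simp only [Finset.mem_image] at hy
    obtain ⟨x, hx, rfl⟩ := hy
    show g (x + m - m) ≤ k
    rw [Nat.add_sub_cancel]
    exact h1 x hx
  · exact ⟨x0 + m, Finset.mem_image_of_mem _ hx0, by
      show g (x0 + m - m) = 0
      rw [Nat.add_sub_cancel]; exact h0⟩
  · rw [hp]; funext m'
    rw [Finset.sum_image (by intro x _ y _ h; have h' : x + m = y + m := h; omega)]
    apply Finset.sum_congr rfl
    intro x _
    show shiftSeq m E x m' - g x = E (x + m) m' - g (x + m - m)
    rw [Nat.add_sub_cancel]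
    rfl

def appSeq (a : List (ℕ → ℕ)) (E : ℕ → ℕ → ℕ) : ℕ → ℕ → ℕ :=
  fun n => if n < a.length then a.getD n zf else E (n - a.length)

lemma appSeq_lt {a : List (ℕ → ℕ)} {E : ℕ → ℕ → ℕ} {n : ℕ} (h : n < a.length) :
    appSeq a E n = a.getD n zf := if_pos h

lemma appSeq_ge {a : List (ℕ → ℕ)} {E : ℕ → ℕ → ℕ} {n : ℕ} (h : a.length ≤ n) :
    appSeq a E n = E (n - a.length) := if_neg (by omega)

lemma getD_mem_of_lt {a : List (ℕ → ℕ)} {n : ℕ} (h : n < a.length) : a.getD n zf ∈ a := by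
  rw [List.getD_eq_getElem _ _ h]
  exact List.getElem_mem _

lemma rList_appSeq (a : List (ℕ → ℕ)) (E : ℕ → ℕ → ℕ) :
    rList a.length (appSeq a E) = a := by
  apply List.ext_getElem (by simp [length_rList])
  intro i h1 h2
  have h1' : i < a.length := h2
  simp only [rList, List.getElem_map, List.getElem_range]
  rw [appSeq_lt h1', List.getD_eq_getElem _ _ h1']

lemma isBlockSeq_appSeq {k : ℕ} {a : List (ℕ → ℕ)} {E : ℕ → ℕ → ℕ}
    (ha : IsFinBlockSeq k a) (hE : IsBlockSeq k E)
    (hsep : ∀ p ∈ a, ∀ u, p u ≠ 0 → ∀ j v, E j v ≠ 0 → u < v) :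
    IsBlockSeq k (appSeq a E) := by
  constructor
  · intro n
    by_cases h : n < a.length
    · rw [appSeq_lt h]; exact ha.1 _ (getD_mem_of_lt h)
    · rw [appSeq_ge (by omega)]; exact hE.1 _
  · intro n i j hi hj
    by_cases h1 : n + 1 < a.length
    · rw [appSeq_lt (by omega)] at hi
      rw [appSeq_lt h1] at hj
      exact ha.2 n h1 i j hi hj
    · by_cases h2 : n < a.length
      · rw [appSeq_lt h2] at hi
        rw [appSeq_ge (by omega)] at hj
        exact hsep _ (getD_mem_of_lt h2) i hi _ j hj
      · rw [appSeq_ge (by omega)] at hi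
        rw [appSeq_ge (by omega)] at hj
        rw [show n + 1 - a.length = (n - a.length) + 1 by omega] at hj
        exact hE.2 (n - a.length) i j hi hj

lemma cond_appSeq {k : ℕ} {a : List (ℕ → ℕ)} {E A : ℕ → ℕ → ℕ}
    (hterms : ∀ p ∈ a, InSpan k A p) (hE : Cond k E A) : Cond k (appSeq a E) A := by
  intro n
  by_cases h : n < a.length
  · rw [appSeq_lt h]; exact hterms _ (getD_mem_of_lt h)
  · rw [appSeq_ge (by omega)]; exact hE _

lemma span_appSeq_tail {k : ℕ} (hk : 1 ≤ k) {a : List (ℕ → ℕ)} {E C : ℕ → ℕ → ℕ}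
    (ha : ∀ p ∈ a, IsFINk k p) (hC : IsBlockSeq k C)
    (hCpre : rList a.length C = a) (hCond : Cond k C (appSeq a E)) :
    ∀ n, a.length ≤ n → InSpan k E (C n) := by
  intro n hn
  have hpre : ∀ x, x < a.length → C x = a.getD x zf := by
    intro x hx
    rw [← hCpre, getD_rList _ hx]
  obtain ⟨s, g, hgk, ⟨x0, hx0s, hx0⟩, hpeq⟩ := inSpan_iff.mp (hCond n)
  have hkill : ∀ x ∈ s, x < a.length → ∀ m', appSeq a E x m' - g x = 0 := by
    intro x hx hxa m'
    by_contra hc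
    have hCnm : C n m' = ∑ x' ∈ s, (appSeq a E x' m' - g x') := congrFun hpeq m'
    have hle : appSeq a E x m' - g x ≤ ∑ x' ∈ s, (appSeq a E x' m' - g x') :=
      Finset.single_le_sum (f := fun x' => appSeq a E x' m' - g x')
        (fun _ _ => Nat.zero_le _) hx
    have hCn : C n m' ≠ 0 := by omega
    have hCx : C x m' ≠ 0 := by
      rw [hpre x hxa, ← appSeq_lt (E := E) hxa]
      omega
    have := blockseq_lt hk hC n x (by omega) m' m' hCx hCn
    omega
  have hset : ∀ m', C n m' = ∑ x ∈ s.filter (fun x => a.length ≤ x), (appSeq a E x m' - g x) := by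
    intro m'
    rw [congrFun hpeq m']
    symm
    apply Finset.sum_subset (Finset.filter_subset _ _)
    intro x hx hnx
    simp only [Finset.mem_filter] at hnx
    have hxa : x < a.length := by
      by_contra h; exact hnx ⟨hx, by omega⟩
    exact hkill x hx hxa m'
  rw [inSpan_iff]
  refine ⟨(s.filter (fun x => a.length ≤ x)).image (· - a.length),
    fun y => g (y + a.length), ?_, ?_, ?_⟩
  · intro y hy
    simp only [Finset.mem_image, Finset.mem_filter] at hy
    obtain ⟨x, ⟨hxs, hxge⟩, rfl⟩ := hy
    show g (x - a.length + a.length) ≤ k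
    rw [show x - a.length + a.length = x by omega]
    exact hgk x hxs
  · have hx0ge : a.length ≤ x0 := by
      by_contra hlt
      push_neg at hlt
      have hz := hkill x0 hx0s hlt
      have hfin := ha _ (getD_mem_of_lt hlt)
      obtain ⟨w, hw⟩ := hfin.2.2
      have := hz w
      rw [appSeq_lt hlt] at this
      omega
    refine ⟨x0 - a.length, ?_, ?_⟩
    · exact Finset.mem_image.mpr ⟨x0, Finset.mem_filter.mpr ⟨hx0s, hx0ge⟩, rfl⟩
    · show g (x0 - a.length + a.length) = 0
      rw [show x0 - a.length + a.length = x0 by omega]; exact hx0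
  · funext m'
    rw [hset m', Finset.sum_image
      (by intro x hx y hy hxy; simp only [Finset.coe_filter, Finset.mem_coe, Finset.mem_filter, Set.mem_setOf_eq] at hx hy hxy; omega)]
    apply Finset.sum_congr rfl
    intro x hx
    simp only [Finset.mem_filter] at hx
    show appSeq a E x m' - g x = E (x - a.length) m' - g (x - a.length + a.length)
    rw [appSeq_ge hx.2, show x - a.length + a.length = x by omega]

lemma symmdiff_appSeq_finite (a : List (ℕ → ℕ)) (m : ℕ) (E : ℕ → ℕ → ℕ) :
    (Set.range E ∆ Set.range (appSeq a (shiftSeq m E))).Finite := by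
  apply Set.Finite.subset (Set.Finite.union (a.finite_toSet) ((Set.finite_Iio m).image E))
  intro p hp
  rw [Set.mem_symmDiff] at hp
  rcases hp with ⟨⟨j, rfl⟩, hp2⟩ | ⟨⟨n, rfl⟩, hp2⟩
  · right
    rcases Nat.lt_or_ge j m with h | h
    · exact ⟨j, h, rfl⟩
    · exfalso
      apply hp2
      refine ⟨a.length + (j - m), ?_⟩
      rw [appSeq_ge (by omega)]
      have harith : a.length + (j - m) - a.length + m = j := by omega
      show E (a.length + (j - m) - a.length + m) = E j
      rw [harith]
  · rcases Nat.lt_or_ge n a.length with h | h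
    · left
      rw [appSeq_lt h]
      exact getD_mem_of_lt h
    · exfalso
      apply hp2
      rw [appSeq_ge h]
      exact ⟨n - a.length + m, rfl⟩

lemma exists_listBound (a : List (ℕ → ℕ)) (ha : ∀ p ∈ a, (supp p).Finite) :
    ∃ U, ∀ p ∈ a, ∀ u, p u ≠ 0 → u ≤ U := by
  induction a with
  | nil => exact ⟨0, by simp⟩
  | cons q l ih =>
    obtain ⟨U1, hU1⟩ := ih (fun p hp => ha p (List.mem_cons_of_mem _ hp))
    obtain ⟨U2, hU2⟩ := (ha q List.mem_cons_self).bddAbove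
    refine ⟨max U1 U2, ?_⟩
    intro p hp u hu
    rcases List.mem_cons.mp hp with rfl | hp
    · have := hU2 (show u ∈ supp p from hu)
      omega
    · have := hU1 p hp u hu
      omega

lemma exists_shift_sep {k : ℕ} (hk : 1 ≤ k) (a : List (ℕ → ℕ))
    (ha : ∀ p ∈ a, (supp p).Finite) (E : ℕ → ℕ → ℕ) (hE : IsBlockSeq k E) :
    ∃ m, ∀ p ∈ a, ∀ u, p u ≠ 0 → ∀ j v, shiftSeq m E j v ≠ 0 → u < v := by
  obtain ⟨U, hU⟩ := exists_listBound a ha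
  refine ⟨U + 1, ?_⟩
  intro p hp u hu j v hv
  have h1 := hU p hp u hu
  have h2 := blockseq_ge hk hE (j + (U + 1)) v hv
  omega

lemma basic_prefix_apply {k : ℕ} {a : List (ℕ → ℕ)} {A C : ℕ → ℕ → ℕ}
    (h : C ∈ Basic k a A) {x : ℕ} (hx : x < a.length) : C x = a.getD x zf := by
  have h' := h.2.1
  conv_rhs => rw [← h']
  rw [getD_rList _ hx]

lemma finCond_of_mem_basic {k : ℕ} {a : List (ℕ → ℕ)} {A B₀ : ℕ → ℕ → ℕ}
    (h : B₀ ∈ Basic k a A) : FinCond k a A := by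
  obtain ⟨hbs, hpre, hcond⟩ := h
  have hmem : ∀ p ∈ a, ∃ x, x < a.length ∧ B₀ x = p := by
    intro p hp
    conv at hp => rw [← hpre]
    obtain ⟨x, hx, he⟩ := mem_rList.mp hp
    exact ⟨x, hx, he⟩
  refine ⟨⟨?_, ?_⟩, ?_⟩
  · intro p hp
    obtain ⟨x, _, he⟩ := hmem p hp
    rw [← he]; exact hbs.1 x
  · intro m hm i j hi hj
    have e1 : a.getD m zf = B₀ m := by
      conv_lhs => rw [← hpre]
      exact getD_rList _ (by omega)
    have e2 : a.getD (m + 1) zf = B₀ (m + 1) := by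
      conv_lhs => rw [← hpre]
      exact getD_rList _ (by omega)
    rw [e1] at hi; rw [e2] at hj
    exact hbs.2 m i j hi hj
  · intro p hp
    obtain ⟨x, _, he⟩ := hmem p hp
    rw [← he]; exact hcond x

lemma isFinBlockSeq_rList {k i : ℕ} {C : ℕ → ℕ → ℕ} (hC : IsBlockSeq k C) :
    IsFinBlockSeq k (rList i C) := by
  constructor
  · intro p hp
    obtain ⟨x, _, he⟩ := mem_rList.mp hp
    rw [← he]; exact hC.1 x
  · intro m hm u v hu hv
    rw [length_rList] at hm
    rw [getD_rList _ (by omega)] at hu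
    rw [getD_rList _ (by omega)] at hv
    exact hC.2 m u v hu hv

lemma finCond_rList {k i : ℕ} {C B : ℕ → ℕ → ℕ} (hC : IsBlockSeq k C) (h : Cond k C B) :
    FinCond k (rList i C) B := by
  refine ⟨isFinBlockSeq_rList hC, fun p hp => ?_⟩
  obtain ⟨x, _, he⟩ := mem_rList.mp hp
  rw [← he]; exact h x

lemma inSpanList_of_inSpan {k : ℕ} {A : ℕ → ℕ → ℕ} {p : ℕ → ℕ} (h : InSpan k A p) :
    ∃ N, InSpanList k (rList N A) p := by
  obtain ⟨s, g, h1, h2, h3⟩ := inSpan_iff.mp h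
  obtain ⟨x0, hx0, _⟩ := id h2
  refine ⟨s.max' ⟨x0, hx0⟩ + 1, inSpanList_rList_iff.mpr ⟨s, g, ?_, h1, h2, h3⟩⟩
  intro x hx
  have := Finset.le_max' s x hx
  omega

lemma inSpanList_mono {k N M : ℕ} {A : ℕ → ℕ → ℕ} {p : ℕ → ℕ}
    (h : InSpanList k (rList N A) p) (hNM : N ≤ M) : InSpanList k (rList M A) p := by
  rw [inSpanList_rList_iff] at h ⊢
  obtain ⟨s, g, h1, h2, h3, h4⟩ := h
  exact ⟨s, g, fun x hx => lt_of_lt_of_le (h1 x hx) hNM, h2, h3, h4⟩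

lemma inSpan_of_inSpanList {k N : ℕ} {A : ℕ → ℕ → ℕ} {p : ℕ → ℕ}
    (h : InSpanList k (rList N A) p) : InSpan k A p := by
  rw [inSpanList_rList_iff] at h
  obtain ⟨s, g, _, h2, h3, h4⟩ := h
  exact inSpan_iff.mpr ⟨s, g, h2, h3, h4⟩

lemma depth_spec {k : ℕ} {A : ℕ → ℕ → ℕ} {t : List (ℕ → ℕ)} (h : FinCond k t A) :
    ∀ p ∈ t, InSpanList k (rList (depth k A t) A) p := by
  have hunif : ∃ N, ∀ p ∈ t, InSpanList k (rList N A) p := by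
    have hh := h.2
    clear h
    induction t with
    | nil => exact ⟨0, by simp⟩
    | cons q l ih =>
      obtain ⟨N1, hN1⟩ := ih (fun p hp => hh p (List.mem_cons_of_mem _ hp))
      obtain ⟨N2, hN2⟩ := inSpanList_of_inSpan (hh q List.mem_cons_self)
      refine ⟨max N1 N2, ?_⟩
      intro p hp
      rcases List.mem_cons.mp hp with rfl | hp
      · exact inSpanList_mono hN2 (le_max_right _ _)
      · exact inSpanList_mono (hN1 p hp) (le_max_left _ _)
  exact Nat.sInf_mem hunif

lemma depth_le {k N : ℕ} {A : ℕ → ℕ → ℕ} {t : List (ℕ → ℕ)}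
    (h : ∀ p ∈ t, InSpanList k (rList N A) p) : depth k A t ≤ N := Nat.sInf_le h

lemma rList_prefix {d m : ℕ} {A A' : ℕ → ℕ → ℕ} (h : rList d A' = rList d A) (hm : m ≤ d) :
    rList m A' = rList m A := by
  rw [← take_rList A' hm, ← take_rList A hm, h]

lemma basic_rList_pre {k d : ℕ} {X B' : ℕ → ℕ → ℕ} (h : B' ∈ Basic k (rList d X) X) :
    rList d B' = rList d X := by
  have h' := h.2.1
  rwa [length_rList] at h'

lemma mem_basic_rList {k d : ℕ} {X B' : ℕ → ℕ → ℕ} (hbs : IsBlockSeq k B')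
    (hpre : rList d B' = rList d X) (hc : Cond k B' X) : B' ∈ Basic k (rList d X) X :=
  ⟨hbs, by rw [length_rList]; exact hpre, hc⟩

lemma finCond_of_prefix {k : ℕ} {A A' : ℕ → ℕ → ℕ} {t : List (ℕ → ℕ)} (hFC : FinCond k t A)
    (hpre : rList (depth k A t) A' = rList (depth k A t) A) : FinCond k t A' := by
  refine ⟨hFC.1, fun p hp => ?_⟩
  have h1 := depth_spec hFC p hp
  rw [← hpre] at h1
  exact inSpan_of_inSpanList h1

lemma prefix_chain {k : ℕ} {A A' B' : ℕ → ℕ → ℕ} {t : List (ℕ → ℕ)} (hFC : FinCond k t A)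
    (hpre : rList (depth k A t) A' = rList (depth k A t) A)
    (hB' : rList (depth k A' t) B' = rList (depth k A' t) A') :
    rList (depth k A t) B' = rList (depth k A t) A := by
  have hFC' : FinCond k t A' := finCond_of_prefix hFC hpre
  have hd : depth k A t ≤ depth k A' t := by
    by_contra hlt
    push_neg at hlt
    have h2 : rList (depth k A' t) A' = rList (depth k A' t) A := rList_prefix hpre (le_of_lt hlt)
    have h3 : depth k A t ≤ depth k A' t :=
      depth_le (fun p hp => by rw [← h2]; exact depth_spec hFC' p hp)
    omega
  calc rList (depth k A t) B' = rList (depth k A t) A' := rList_prefix hB' hd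
    _ = rList (depth k A t) A := hpre

lemma appSeq_shift_eq {a : List (ℕ → ℕ)} {C : ℕ → ℕ → ℕ}
    (hpre : ∀ x, x < a.length → C x = a.getD x zf) :
    appSeq a (shiftSeq a.length C) = C := by
  funext n
  by_cases h : n < a.length
  · rw [appSeq_lt h, hpre n h]
  · rw [appSeq_ge (by omega)]
    show C (n - a.length + a.length) = C n
    rw [show n - a.length + a.length = n by omega]

lemma rList_append_eq {L N : ℕ} {C : ℕ → ℕ → ℕ} {a : List (ℕ → ℕ)} (hpre : rList L C = a) :
    rList (L + N) C = a ++ rList N (shiftSeq L C) := by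
  rw [← hpre]
  apply List.ext_getElem (by simp [rList])
  intro i h1 h2
  simp only [rList, List.getElem_map, List.getElem_range]
  by_cases h : i < L
  · rw [List.getElem_append_left (by simpa [rList] using h)]
    simp [rList]
  · rw [List.getElem_append_right (by simpa [rList] using h)]
    simp only [rList, List.length_map, List.length_range, List.getElem_map, List.getElem_range]
    show C i = C (i - L + L)
    rw [show i - L + L = i by omega]

lemma finCond_nil {k : ℕ} (A : ℕ → ℕ → ℕ) : FinCond k [] A :=
  ⟨⟨by simp, by simp⟩, by simp⟩

-- acceptance and rejection (relative to k, X, and the root a)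
def AccX (k : ℕ) (X : Set (ℕ → ℕ → ℕ)) (a t : List (ℕ → ℕ)) (A' : ℕ → ℕ → ℕ) : Prop :=
  ∀ C ∈ Basic k t A', IsBlockSeq k (appSeq a C) → appSeq a C ∈ X

def RejX (k : ℕ) (H : Coideal k) (X : Set (ℕ → ℕ → ℕ)) (a t : List (ℕ → ℕ))
    (A' : ℕ → ℕ → ℕ) : Prop :=
  ∀ A₃, H.mem A₃ → Cond k A₃ A' → (Basic k t A₃).Nonempty → ¬ AccX k X a t A₃

lemma accX_mono {k : ℕ} {X : Set (ℕ → ℕ → ℕ)} {a t : List (ℕ → ℕ)} {A' B' : ℕ → ℕ → ℕ}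
    (hk : 1 ≤ k) (hA' : IsBlockSeq k A') (hB' : IsBlockSeq k B') (hc : Cond k A' B')
    (h : AccX k X a t B') : AccX k X a t A' :=
  fun C hC hbs => h C (basic_mono hk hA' hB' hc hC) hbs

lemma rejX_mono {k : ℕ} {H : Coideal k} {X : Set (ℕ → ℕ → ℕ)} {a t : List (ℕ → ℕ)}
    {A' B' : ℕ → ℕ → ℕ} (hk : 1 ≤ k) (hA' : IsBlockSeq k A') (hB' : IsBlockSeq k B')
    (hc : Cond k A' B') (h : RejX k H X a t B') : RejX k H X a t A' :=
  fun A₃ h1 h2 h3 => h A₃ h1 (cond_trans hk hA' hB' h2 hc) h3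

lemma surgery {k : ℕ} (hk : 1 ≤ k) (H : Coideal k) (t : List (ℕ → ℕ)) (E : ℕ → ℕ → ℕ)
    (hE : H.mem E) (ht : IsFinBlockSeq k t) :
    ∃ B', H.mem B' ∧ IsBlockSeq k B' ∧ rList t.length B' = t ∧
      (∀ n, t.length ≤ n → InSpan k E (B' n)) ∧
      (∀ n, n < t.length → B' n = t.getD n zf) ∧
      (∀ C, C ∈ Basic k t B' → ∀ n, t.length ≤ n → InSpan k E (C n)) := by
  obtain ⟨m, hm⟩ := exists_shift_sep hk t (fun p hp => (ht.1 p hp).2.1) E (H.blockseq E hE)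
  set B' := appSeq t (shiftSeq m E) with hB'
  have hbs : IsBlockSeq k B' :=
    isBlockSeq_appSeq ht (isBlockSeq_shift (H.blockseq E hE)) hm
  have hmem : H.mem B' := H.finiteChanges E B' hE hbs (symmdiff_appSeq_finite t m E)
  refine ⟨B', hmem, hbs, rList_appSeq t _, ?_, ?_, ?_⟩
  · intro n hn
    rw [hB', appSeq_ge hn]
    exact inSpan_self E _
  · intro n hn
    rw [hB']
    exact appSeq_lt hn
  · intro C hC n hn
    exact inSpan_shift_absorb (span_appSeq_tail hk ht.1 hC.1 hC.2.1 hC.2.2 n hn)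

lemma D1_denseOpen {k : ℕ} (hk : 1 ≤ k) (H : Coideal k) (X : Set (ℕ → ℕ → ℕ))
    (a : List (ℕ → ℕ)) (A : ℕ → ℕ → ℕ) (hA : H.mem A) (t : List (ℕ → ℕ))
    (hFC : FinCond k t A) :
    DenseOpenIn k
      {A' | (H.mem A' ∧ A' ∈ Basic k (rList (depth k A t) A) A) ∧
        (AccX k X a t A' ∨ RejX k H X a t A')}
      ({B | H.mem B} ∩ Basic k (rList (depth k A t) A) A) := by
  refine ⟨fun A' hA' => ⟨hA'.1.1, hA'.1.2⟩, ?_, ?_⟩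
  · rintro A'' ⟨hA''H, hA''B⟩
    by_cases hrej : RejX k H X a t A''
    · exact ⟨A'', ⟨⟨hA''H, hA''B⟩, Or.inr hrej⟩, cond_refl A''⟩
    · unfold RejX at hrej
      push_neg at hrej
      obtain ⟨A₃, h3H, h3c, h3ne, h3acc⟩ := hrej
      have hFC'' : FinCond k t A'' := finCond_of_prefix hFC (basic_rList_pre hA''B)
      obtain ⟨A', hA'H, hA'B, hA'ne, hA'sub⟩ := H.a3_2 A'' hA''H t hFC'' A₃ h3H h3c h3ne
      have hA'bs := H.blockseq A' hA'H
      have hcondA'' : Cond k A' A'' := hA'B.2.2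
      have hpre : rList (depth k A t) A' = rList (depth k A t) A :=
        prefix_chain hFC (basic_rList_pre hA''B) (basic_rList_pre hA'B)
      have hSA' : A' ∈ Basic k (rList (depth k A t) A) A :=
        mem_basic_rList hA'bs hpre
          (cond_trans hk (H.blockseq A'' hA''H) (H.blockseq A hA) hcondA'' hA''B.2.2)
      refine ⟨A', ⟨⟨hA'H, hSA'⟩, Or.inl ?_⟩, hcondA''⟩
      intro C hC hbs
      exact h3acc C (hA'sub hC) hbs
  · rintro A' B' ⟨hA'H, hA'B⟩ ⟨⟨hB'H, _⟩, hdec⟩ hc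
    refine ⟨⟨hA'H, hA'B⟩, ?_⟩
    rcases hdec with hacc | hrej
    · exact Or.inl (accX_mono hk (H.blockseq _ hA'H) (H.blockseq _ hB'H) hc hacc)
    · exact Or.inr (rejX_mono hk (H.blockseq _ hA'H) (H.blockseq _ hB'H) hc hrej)

lemma D2_denseOpen {k : ℕ} (hk : 1 ≤ k) (H : Coideal k) (X : Set (ℕ → ℕ → ℕ))
    (a : List (ℕ → ℕ)) (B₁ : ℕ → ℕ → ℕ) (hB₁ : H.mem B₁)
    (As1 : List (ℕ → ℕ) → ℕ → ℕ → ℕ)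
    (hAs1 : ∀ b, FinCond k b B₁ → Basic k b B₁ ⊆ Basic k b (As1 b))
    (t : List (ℕ → ℕ)) (hFC : FinCond k t B₁) :
    DenseOpenIn k
      {A' | (H.mem A' ∧ A' ∈ Basic k (rList (depth k B₁ t) B₁) B₁) ∧
        (AccX k X a t A' ∨
          ∀ C ∈ Basic k t A',
            ¬ AccX k X a (rList (t.length + 1) C) (As1 (rList (t.length + 1) C)))}
      ({B | H.mem B} ∩ Basic k (rList (depth k B₁ t) B₁) B₁) := by
  refine ⟨fun A' hA' => ⟨hA'.1.1, hA'.1.2⟩, ?_, ?_⟩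
  · rintro A'' ⟨hA''H, hA''B⟩
    have hFC'' : FinCond k t A'' := finCond_of_prefix hFC (basic_rList_pre hA''B)
    obtain ⟨B', hB'H, hB'B, hdich⟩ :=
      H.a4 A'' hA''H t hFC'' {b | AccX k X a b (As1 b)}
    have hB'bs := H.blockseq B' hB'H
    have hcond : Cond k B' A'' := hB'B.2.2
    have hpre : rList (depth k B₁ t) B' = rList (depth k B₁ t) B₁ :=
      prefix_chain hFC (basic_rList_pre hA''B) (basic_rList_pre hB'B)
    have hS : B' ∈ Basic k (rList (depth k B₁ t) B₁) B₁ :=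
      mem_basic_rList hB'bs hpre
        (cond_trans hk (H.blockseq A'' hA''H) (H.blockseq B₁ hB₁) hcond hA''B.2.2)
    rcases hdich with hsub | hdisj
    · refine ⟨B', ⟨⟨hB'H, hS⟩, Or.inl ?_⟩, hcond⟩
      intro C hC hbs
      have hb : AccX k X a (rList (t.length + 1) C) (As1 (rList (t.length + 1) C)) :=
        hsub ⟨C, hC, rfl⟩
      have hCbs : IsBlockSeq k C := hC.1
      have hC1 : Cond k C A'' :=
        cond_trans hk hB'bs (H.blockseq A'' hA''H) hC.2.2 hcond
      have hCB₁ : Cond k C B₁ :=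
        cond_trans hk (H.blockseq A'' hA''H) (H.blockseq B₁ hB₁) hC1 hA''B.2.2
      have hFCb : FinCond k (rList (t.length + 1) C) B₁ := finCond_rList hCbs hCB₁
      have hCmem : C ∈ Basic k (rList (t.length + 1) C) B₁ :=
        ⟨hCbs, by rw [length_rList], hCB₁⟩
      exact hb C (hAs1 _ hFCb hCmem) hbs
    · refine ⟨B', ⟨⟨hB'H, hS⟩, Or.inr ?_⟩, hcond⟩
      intro C hC hacc
      exact (Set.eq_empty_iff_forall_notMem.mp hdisj (rList (t.length + 1) C))
        ⟨⟨C, hC, rfl⟩, hacc⟩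
  · rintro A' B' ⟨hA'H, hA'B⟩ ⟨⟨hB'H, _⟩, hdec⟩ hc
    refine ⟨⟨hA'H, hA'B⟩, ?_⟩
    rcases hdec with hacc | hrej
    · exact Or.inl (accX_mono hk (H.blockseq _ hA'H) (H.blockseq _ hB'H) hc hacc)
    · refine Or.inr (fun C hC => hrej C ?_)
      exact basic_mono hk (H.blockseq _ hA'H) (H.blockseq _ hB'H) hc hC

lemma rList_congr {n : ℕ} {A B : ℕ → ℕ → ℕ} (h : ∀ x, x < n → A x = B x) :
    rList n A = rList n B := by
  apply List.ext_getElem (by simp [rList])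
  intro i h1 h2
  simp only [rList, List.getElem_map, List.getElem_range]
  exact h i (by simpa [rList] using h1)


end

/-- Every metrically open subset of `FIN_k^∞` (a union of basic sets `[b]`)
is `H`-Ramsey, for every semiselective coideal `H`. -/
theorem open_H_Ramsey (k : ℕ) (H : Coideal k) (hH : Semiselective k H)
    (X : Set (ℕ → ℕ → ℕ))
    (hX : ∃ F : Set (List (ℕ → ℕ)), X = {A | ∃ n, rList n A ∈ F})
    (a : List (ℕ → ℕ)) (A : ℕ → ℕ → ℕ) (hA : H.mem A)
    (hne : (Basic k a A).Nonempty) :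
    ∃ B, H.mem B ∧ B ∈ Basic k a A ∧
      (Basic k a B ⊆ X ∨ Basic k a B ∩ X = ∅) := by
  classical
  obtain ⟨F, hXF⟩ := hX
  rcases Nat.eq_zero_or_pos k with hk0 | hk
  · -- degenerate case k = 0
    subst hk0
    obtain ⟨B₀, hB₀⟩ := hne
    have hzero : ∀ B : ℕ → ℕ → ℕ, IsBlockSeq 0 B → B = fun _ _ => 0 := by
      intro B hB
      funext n m
      have := (hB.1 n).1 m
      omega
    have hAz : A = fun _ _ => (0 : ℕ) := hzero A (H.blockseq A hA)
    have hpre : rList a.length A = a := by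
      rw [hAz, ← hzero B₀ hB₀.1]
      exact hB₀.2.1
    have hmemA : A ∈ Basic 0 a A := ⟨H.blockseq A hA, hpre, cond_refl A⟩
    by_cases hAX : A ∈ X
    · refine ⟨A, hA, hmemA, Or.inl ?_⟩
      intro C hC
      have : C = A := by rw [hzero C hC.1, hAz]
      rwa [this]
    · refine ⟨A, hA, hmemA, Or.inr ?_⟩
      rw [Set.eq_empty_iff_forall_notMem]
      rintro C ⟨hC, hCX⟩
      have : C = A := by rw [hzero C hC.1, hAz]
      rw [this] at hCX
      exact hAX hCX
  · -- main case k ≥ 1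
    have hAbs := H.blockseq A hA
    have hFCa : FinCond k a A := by
      obtain ⟨B₀, hB₀⟩ := hne
      exact finCond_of_mem_basic hB₀
    -- Round 1 of semiselectivity
    obtain ⟨B₁, hB₁H, hB₁A, As1, hAs1D, hAs1sub⟩ :=
      hH A hA
        (fun t => {A' | (H.mem A' ∧ A' ∈ Basic k (rList (depth k A t) A) A) ∧
          (AccX k X a t A' ∨ RejX k H X a t A')})
        (fun t hFC => D1_denseOpen hk H X a A hA t hFC) A hA (cond_refl A)
    have hB₁bs := H.blockseq B₁ hB₁H
    -- Round 2 of semiselectivity, below B₁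
    obtain ⟨B₂, hB₂H, hB₂B₁, As2, hAs2D, hAs2sub⟩ :=
      hH B₁ hB₁H
        (fun t => {A' | (H.mem A' ∧ A' ∈ Basic k (rList (depth k B₁ t) B₁) B₁) ∧
          (AccX k X a t A' ∨
            ∀ C ∈ Basic k t A',
              ¬ AccX k X a (rList (t.length + 1) C) (As1 (rList (t.length + 1) C)))})
        (fun t hFC => D2_denseOpen hk H X a B₁ hB₁H As1 hAs1sub t hFC) B₁ hB₁H (cond_refl B₁)
    have hB₂bs := H.blockseq B₂ hB₂H
    have hB₂A : Cond k B₂ A := cond_trans hk hB₁bs hAbs hB₂B₁ hB₁A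
    -- decision at the root
    have hAs1nil := hAs1D [] (finCond_nil A)
    simp only [Set.mem_setOf_eq] at hAs1nil
    obtain ⟨⟨hW1H, hW1B⟩, hdec⟩ := hAs1nil
    have hW1A : Cond k (As1 []) A := hW1B.2.2
    have hWbs := H.blockseq _ hW1H
    rcases hdec with haccnil | hrejnil
    · -- CASE I : the root is accepted
      obtain ⟨Bs, hBsH, hBsbs, hBspre, hBstail, hBshead, hBsspan⟩ :=
        surgery hk H a (As1 []) hW1H hFCa.1
      have hBsA : Cond k Bs A := by
        intro n
        rcases Nat.lt_or_ge n a.length with h | h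
        · rw [hBshead n h]; exact hFCa.2 _ (getD_mem_of_lt h)
        · exact inSpan_trans hk hWbs hAbs hW1A (hBstail n h)
      refine ⟨Bs, hBsH, ⟨hBsbs, hBspre, hBsA⟩, Or.inl ?_⟩
      intro C hC
      have hCbs : IsBlockSeq k C := hC.1
      have hC'bs : IsBlockSeq k (shiftSeq a.length C) := isBlockSeq_shift hCbs
      have hC'W : Cond k (shiftSeq a.length C) (As1 []) := by
        intro n
        exact hBsspan C hC (n + a.length) (by omega)
      have hC'mem : shiftSeq a.length C ∈ Basic k [] (As1 []) :=
        ⟨hC'bs, by simp [rList], hC'W⟩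
      have happ : appSeq a (shiftSeq a.length C) = C :=
        appSeq_shift_eq (fun x hx => basic_prefix_apply hC hx)
      have := haccnil (shiftSeq a.length C) hC'mem (by rw [happ]; exact hCbs)
      rwa [happ] at this
    · -- CASE II : the root is rejected
      obtain ⟨Bs, hBsH, hBsbs, hBspre, hBstail, hBshead, hBsspan⟩ :=
        surgery hk H a B₂ hB₂H hFCa.1
      have hBsA : Cond k Bs A := by
        intro n
        rcases Nat.lt_or_ge n a.length with h | h
        · rw [hBshead n h]; exact hFCa.2 _ (getD_mem_of_lt h)
        · exact inSpan_trans hk hB₂bs hAbs hB₂A (hBstail n h)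
      refine ⟨Bs, hBsH, ⟨hBsbs, hBspre, hBsA⟩, Or.inr ?_⟩
      rw [Set.eq_empty_iff_forall_notMem]
      rintro C ⟨hC, hCX⟩
      rw [hXF] at hCX
      obtain ⟨n, hnF⟩ := hCX
      have hCbs : IsBlockSeq k C := hC.1
      rcases Nat.lt_or_ge a.length n with hlen | hlen
      · -- a.length < n
        set N := n - a.length with hNdef
        set C' := shiftSeq a.length C with hC'def
        have hC'bs : IsBlockSeq k C' := isBlockSeq_shift hCbs
        have hC'B₂ : Cond k C' B₂ := fun j => hBsspan C hC (j + a.length) (by omega)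
        have hC'B₁ : Cond k C' B₁ := cond_trans hk hB₂bs hB₁bs hC'B₂ hB₂B₁
        have hC'A : Cond k C' A := cond_trans hk hB₁bs hAbs hC'B₁ hB₁A
        have hFCt : ∀ i, FinCond k (rList i C') B₂ := fun i => finCond_rList hC'bs hC'B₂
        have hFCtB₁ : ∀ i, FinCond k (rList i C') B₁ := fun i => finCond_rList hC'bs hC'B₁
        have hFCtA : ∀ i, FinCond k (rList i C') A := fun i => finCond_rList hC'bs hC'A
        have key : ∀ i, i ≤ N → RejX k H X a (rList i C') (As1 (rList i C')) := by
          intro i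
          induction i with
          | zero =>
            intro _
            have h0 : rList 0 C' = ([] : List (ℕ → ℕ)) := by simp [rList]
            rw [h0]
            exact hrejnil
          | succ i ih =>
            intro hiN
            have hkey_i := ih (by omega)
            have hD2i := hAs2D (rList i C') (hFCtB₁ i)
            simp only [Set.mem_setOf_eq] at hD2i
            obtain ⟨⟨h2H, h2B⟩, h2dec⟩ := hD2i
            rcases h2dec with hacc2 | hrej2
            · exfalso
              obtain ⟨A₃, hA₃H, hA₃bs, hA₃pre, hA₃tail, hA₃head, _⟩ :=
                surgery hk H (rList i C') B₂ hB₂H (hFCt i).1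
              have hA₃B₂ : Cond k A₃ B₂ := by
                intro j
                rcases Nat.lt_or_ge j (rList i C').length with h | h
                · rw [hA₃head j h, getD_rList _ (by rwa [length_rList] at h)]
                  exact hC'B₂ j
                · exact hA₃tail j h
              have hA₃B₁ : Cond k A₃ B₁ := cond_trans hk hB₂bs hB₁bs hA₃B₂ hB₂B₁
              have hA₃memB₁ : A₃ ∈ Basic k (rList i C') B₁ := ⟨hA₃bs, hA₃pre, hA₃B₁⟩
              have hA₃As1 : Cond k A₃ (As1 (rList i C')) :=
                (hAs1sub _ (hFCtB₁ i) hA₃memB₁).2.2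
              have hA₃acc : AccX k X a (rList i C') A₃ := by
                intro C'' hC'' hbs
                have hC''B₂ : C'' ∈ Basic k (rList i C') B₂ :=
                  ⟨hC''.1, hC''.2.1, cond_trans hk hA₃bs hB₂bs hC''.2.2 hA₃B₂⟩
                exact hacc2 C'' (hAs2sub _ (hFCt i) hC''B₂) hbs
              exact hkey_i A₃ hA₃H hA₃As1 ⟨A₃, hA₃bs, hA₃pre, cond_refl A₃⟩ hA₃acc
            · have hC'memB₂ : C' ∈ Basic k (rList i C') B₂ :=
                ⟨hC'bs, by rw [length_rList], hC'B₂⟩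
              have hnl := hrej2 C' (hAs2sub _ (hFCt i) hC'memB₂)
              rw [length_rList] at hnl
              have hD1i := hAs1D (rList (i + 1) C') (hFCtA (i + 1))
              simp only [Set.mem_setOf_eq] at hD1i
              obtain ⟨_, hdec1⟩ := hD1i
              rcases hdec1 with hacc1 | hrej1
              · exact absurd hacc1 hnl
              · exact hrej1
        have hkeyN := key N (le_refl N)
        have hlistN : rList n C = a ++ rList N C' := by
          have h1 := rList_append_eq (L := a.length) (N := N) (C := C) hC.2.1
          rw [show a.length + N = n by omega] at h1
          exact h1
        have haccN : AccX k X a (rList N C') (As1 (rList N C')) := by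
          intro C'' hC'' hbs
          rw [hXF]
          refine ⟨n, ?_⟩
          have e1 : rList n (appSeq a C'') =
              a ++ rList N (shiftSeq a.length (appSeq a C'')) := by
            have h1 := rList_append_eq (L := a.length) (N := N)
              (C := appSeq a C'') (rList_appSeq a C'')
            rw [show a.length + N = n by omega] at h1
            exact h1
          have e2 : shiftSeq a.length (appSeq a C'') = C'' := by
            funext j
            show appSeq a C'' (j + a.length) = C'' j
            rw [appSeq_ge (by omega)]
            rw [show j + a.length - a.length = j by omega]
          have e3 : rList N C'' = rList N C' := by
            have h2 := hC''.2.1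
            rwa [length_rList] at h2
          show rList n (appSeq a C'') ∈ F
          rw [e1, e2, e3, ← hlistN]
          exact hnF
        have hD1N := hAs1D (rList N C') (hFCtA N)
        simp only [Set.mem_setOf_eq] at hD1N
        obtain ⟨⟨hNH, hNB⟩, _⟩ := hD1N
        have hNe : (Basic k (rList N C') (As1 (rList N C'))).Nonempty :=
          H.a3_1 A hA (rList N C') (hFCtA N) _ hNH hNB
        exact hkeyN _ hNH (cond_refl _) hNe haccN
      · -- n ≤ a.length : everything through a is in X, contradicting the root rejection
        have haccnil : AccX k X a [] (As1 []) := by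
          intro C'' hC'' hbs
          rw [hXF]
          refine ⟨n, ?_⟩
          have e1 : rList n (appSeq a C'') = rList n C := by
            apply rList_congr
            intro x hx
            rw [appSeq_lt (by omega), ← basic_prefix_apply hC (by omega)]
          show rList n (appSeq a C'') ∈ F
          rw [e1]
          exact hnF
        exact hrejnil (As1 []) hW1H (cond_refl _)
          ⟨As1 [], hWbs, by simp [rList], cond_refl _⟩ haccnil


end FINkSpace
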